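/- Let g be a positive integer. In ℤ[c₁, c₂, t₁, t₂]/(c₁ - t₁ - t₂, c₂ - t₁t₂), the product ∏_{i=0}^{2g+2} (g·c₁ - (2g+2-i)·t₁ - i·t₂) equals -c₁ · ∏_{j=0}^{g} ( -(g-j)(g-j+2)c₁² + 4(g+1-j)²c₂ ). -/

import Mathlib

open MvPolynomial

lemma pair_prod {M : Type*} [CommMonoid M] (n : ℕ) (h : ℕ → M) :
    ∏ i ∈ Finset.range (2 * n + 1), h i =
      (∏ j ∈ Finset.range n, h j * h (2 * n - j)) * h n := by
  have e : 2 * n + 1 = n + (n + 1) := by ring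
  rw [e, Finset.prod_range_add, Finset.prod_range_succ']
  have := Finset.prod_range_reflect (fun i => h (2 * n - i)) n
  have e2 : ∀ j ∈ Finset.range n, h (2 * n - (n - 1 - j)) = h (n + (j + 1)) := by
    intro j hj
    rw [Finset.mem_range] at hj
    congr 1
    omega
  rw [Finset.prod_congr rfl e2] at this
  rw [this, Finset.prod_mul_distrib, add_zero, mul_assoc]

lemma stmt4_aux (g : ℕ) :
    (∏ i ∈ Finset.range (2 * g + 3),
        (C (g : ℤ) * (X 2 + X 3) - C ((2 * g + 2 : ℤ) - (i : ℤ)) * X 2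
          - C (i : ℤ) * (X 3 : MvPolynomial (Fin 4) ℤ))) =
      -(X 2 + X 3) * ∏ j ∈ Finset.range (g + 1),
          (C (-((g : ℤ) - (j : ℤ)) * ((g : ℤ) - (j : ℤ) + 2)) * (X 2 + X 3) ^ 2 +
            C (4 * ((g : ℤ) + 1 - (j : ℤ)) ^ 2) * ((X 2 : MvPolynomial (Fin 4) ℤ) * X 3)) := by
  have e3 : 2 * g + 3 = 2 * (g + 1) + 1 := by ring
  rw [e3, pair_prod]
  have hmid : C ((g : ℕ) : ℤ) * (X 2 + X 3) - C ((2 * g + 2 : ℤ) - ((g + 1 : ℕ) : ℤ)) * X 2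
      - C (((g + 1 : ℕ) : ℤ)) * (X 3 : MvPolynomial (Fin 4) ℤ) = -(X 2 + X 3) := by
    have e : ((2 * g + 2 : ℤ) - ((g + 1 : ℕ) : ℤ)) = ((g : ℤ) + 1) := by push_cast; ring
    rw [e]
    push_cast
    simp only [map_add, map_one]
    ring
  rw [hmid, mul_comm]
  congr 1
  refine Finset.prod_congr rfl (fun j hj => ?_)
  rw [Finset.mem_range] at hj
  have hcast : ((2 * (g + 1) - j : ℕ) : ℤ) = 2 * (g : ℤ) + 2 - (j : ℤ) := by
    push_cast [Nat.cast_sub (by omega : j ≤ 2 * (g + 1))]; ring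
  rw [hcast]
  simp only [map_mul, map_add, map_sub, map_neg, map_one, map_ofNat, map_pow]
  ring

theorem stmt_4 (g : ℕ) (hg : 0 < g) :
    let c₁ : MvPolynomial (Fin 4) ℤ := X 0
    let c₂ : MvPolynomial (Fin 4) ℤ := X 1
    let t₁ : MvPolynomial (Fin 4) ℤ := X 2
    let t₂ : MvPolynomial (Fin 4) ℤ := X 3
    let I : Ideal (MvPolynomial (Fin 4) ℤ) :=
      Ideal.span {c₁ - t₁ - t₂, c₂ - t₁ * t₂}
    Ideal.Quotient.mk I
        (∏ i ∈ Finset.range (2 * g + 3),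
          (C (g : ℤ) * c₁ - C ((2 * g + 2 : ℤ) - (i : ℤ)) * t₁ - C (i : ℤ) * t₂)) =
      Ideal.Quotient.mk I
        (-c₁ * ∏ j ∈ Finset.range (g + 1),
          (C (-((g : ℤ) - (j : ℤ)) * ((g : ℤ) - (j : ℤ) + 2)) * c₁ ^ 2 +
            C (4 * ((g : ℤ) + 1 - (j : ℤ)) ^ 2) * c₂)) := by
  intro c₁ c₂ t₁ t₂ I
  show Ideal.Quotient.mk I
        (∏ i ∈ Finset.range (2 * g + 3),
          (C (g : ℤ) * X 0 - C ((2 * g + 2 : ℤ) - (i : ℤ)) * X 2 - C (i : ℤ) * X 3)) =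
      Ideal.Quotient.mk I
        (-X 0 * ∏ j ∈ Finset.range (g + 1),
          (C (-((g : ℤ) - (j : ℤ)) * ((g : ℤ) - (j : ℤ) + 2)) * X 0 ^ 2 +
            C (4 * ((g : ℤ) + 1 - (j : ℤ)) ^ 2) * X 1))
  set f : Fin 4 → MvPolynomial (Fin 4) ℤ := ![X 2 + X 3, X 2 * X 3, X 2, X 3] with hf
  have key : ∀ p : MvPolynomial (Fin 4) ℤ,
      Ideal.Quotient.mk I (bind₁ f p) = Ideal.Quotient.mk I p := by
    intro p
    have h := MvPolynomial.ringHom_ext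
      (f := (Ideal.Quotient.mk I).comp ((bind₁ f) : MvPolynomial (Fin 4) ℤ →+* MvPolynomial (Fin 4) ℤ))
      (g := Ideal.Quotient.mk I)
      (fun a => by simp) ?_
    · exact RingHom.congr_fun h p
    · intro i
      fin_cases i <;>
        · show Ideal.Quotient.mk I (bind₁ f (X _)) = _
          rw [bind₁_X_right, Ideal.Quotient.eq]
          simp only [hf]
          first
          | · show (X 2 + X 3 : MvPolynomial (Fin 4) ℤ) - X 0 ∈ I
              have h1 : (X 0 - X 2 - X 3 : MvPolynomial (Fin 4) ℤ) ∈ I :=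
                Ideal.subset_span (by simp [I, c₁, c₂, t₁, t₂])
              have e : (X 2 + X 3 : MvPolynomial (Fin 4) ℤ) - X 0 = -(X 0 - X 2 - X 3) := by ring
              rw [e]; exact I.neg_mem h1
          | · show (X 2 * X 3 : MvPolynomial (Fin 4) ℤ) - X 1 ∈ I
              have h1 : (X 1 - X 2 * X 3 : MvPolynomial (Fin 4) ℤ) ∈ I :=
                Ideal.subset_span (by simp [I, c₁, c₂, t₁, t₂])
              have e : (X 2 * X 3 : MvPolynomial (Fin 4) ℤ) - X 1 = -(X 1 - X 2 * X 3) := by ring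
              rw [e]; exact I.neg_mem h1
          | simp
  rw [← key (∏ i ∈ Finset.range (2 * g + 3),
          (C (g : ℤ) * X 0 - C ((2 * g + 2 : ℤ) - (i : ℤ)) * X 2 - C (i : ℤ) * X 3)),
      ← key (-X 0 * ∏ j ∈ Finset.range (g + 1),
          (C (-((g : ℤ) - (j : ℤ)) * ((g : ℤ) - (j : ℤ) + 2)) * X 0 ^ 2 +
            C (4 * ((g : ℤ) + 1 - (j : ℤ)) ^ 2) * X 1))]
  congr 1
  have hL : (bind₁ f) (∏ i ∈ Finset.range (2 * g + 3),
          (C (g : ℤ) * X 0 - C ((2 * g + 2 : ℤ) - (i : ℤ)) * X 2 - C (i : ℤ) * X 3)) =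
      ∏ i ∈ Finset.range (2 * g + 3),
        (C (g : ℤ) * (X 2 + X 3) - C ((2 * g + 2 : ℤ) - (i : ℤ)) * X 2 - C (i : ℤ) * X 3) := by
    rw [map_prod]
    exact Finset.prod_congr rfl (fun i _ => by simp [hf, map_ofNat])
  have hR : (bind₁ f) (-X 0 * ∏ j ∈ Finset.range (g + 1),
          (C (-((g : ℤ) - (j : ℤ)) * ((g : ℤ) - (j : ℤ) + 2)) * X 0 ^ 2 +
            C (4 * ((g : ℤ) + 1 - (j : ℤ)) ^ 2) * X 1)) =
      -(X 2 + X 3) * ∏ j ∈ Finset.range (g + 1),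
          (C (-((g : ℤ) - (j : ℤ)) * ((g : ℤ) - (j : ℤ) + 2)) * (X 2 + X 3) ^ 2 +
            C (4 * ((g : ℤ) + 1 - (j : ℤ)) ^ 2) * (X 2 * X 3)) := by
    rw [map_mul, map_neg, map_prod]
    congr 1
    · simp [hf]
    · exact Finset.prod_congr rfl (fun j _ => by simp [hf, map_ofNat])
  rw [hL, hR, stmt4_aux]
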